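/- Let A be a commutative ring, let x_1,…,x_r ∈ A, and let w_1,…,w_r be positive integers. In the polynomial ring A[T], the A-subalgebra generated by the elements x_i·T^j for 1 ≤ i ≤ r and 1 ≤ j ≤ w_i is equal to the set of polynomials f ∈ A[T] such that for every m ≥ 0 the coefficient of T^m in f lies in the ideal I_m of A generated by the monomials x_1^{b_1}⋯x_r^{b_r} with ∑ w_i b_i ≥ m. -/

import Mathlib

open Polynomial

section Aux

variable {A : Type*} [CommRing A] {r : ℕ}

private def Im (x : Fin r → A) (w : Fin r → ℕ) (m : ℕ) : Ideal A :=
  Ideal.span {y : A | ∃ b : Fin r → ℕ, m ≤ ∑ i, w i * b i ∧ y = ∏ i, x i ^ b i}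

private lemma mul_mem_Im (x : Fin r → A) (w : Fin r → ℕ) (k l : ℕ) {a b : A}
    (ha : a ∈ Im x w k) (hb : b ∈ Im x w l) : a * b ∈ Im x w (k + l) := by
  induction ha using Submodule.span_induction with
  | mem a hmem =>
    obtain ⟨c, hc, rfl⟩ := hmem
    induction hb using Submodule.span_induction with
    | mem b hmemb =>
      obtain ⟨c', hc', rfl⟩ := hmemb
      apply Ideal.subset_span
      refine ⟨c + c', ?_, ?_⟩
      · calc k + l ≤ (∑ i, w i * c i) + ∑ i, w i * c' i := Nat.add_le_add hc hc'
          _ = ∑ i, w i * (c + c') i := by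
            rw [← Finset.sum_add_distrib]
            exact Finset.sum_congr rfl fun i _ => by simp [Nat.mul_add]
      · rw [← Finset.prod_mul_distrib]
        exact Finset.prod_congr rfl fun i _ => by simp [pow_add]
    | zero => simp
    | add u v hu hv ihu ihv => rw [mul_add]; exact add_mem ihu ihv
    | smul t u hu ihu => rw [mul_smul_comm]; exact Submodule.smul_mem _ _ ihu
  | zero => simp
  | add u v hu hv ihu ihv => rw [add_mul]; exact add_mem ihu ihv
  | smul t u hu ihu => rw [smul_mul_assoc]; exact Submodule.smul_mem _ _ ihu

private lemma Im_mono (x : Fin r → A) (w : Fin r → ℕ) {k l : ℕ} (h : k ≤ l) :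
    Im x w l ≤ Im x w k := by
  apply Ideal.span_le.mpr
  rintro y ⟨b, hb, rfl⟩
  exact Ideal.subset_span ⟨b, le_trans h hb, rfl⟩

private lemma one_mem_Im (x : Fin r → A) (w : Fin r → ℕ) : (1 : A) ∈ Im x w 0 :=
  Ideal.subset_span ⟨0, by simp, by simp⟩

-- single variable: C (a^b) * X^m in adjoin S when m ≤ w*b
private lemma single_mem {S : Set (Polynomial A)} (a : A) (w : ℕ)
    (hgen : ∀ j : ℕ, 1 ≤ j → j ≤ w → C a * X ^ j ∈ Algebra.adjoin A S) :
    ∀ b m : ℕ, m ≤ w * b → C (a ^ b) * X ^ m ∈ Algebra.adjoin A S := by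
  intro b
  induction b with
  | zero =>
    intro m hm
    simp only [Nat.mul_zero, Nat.le_zero] at hm
    subst hm
    simp only [pow_zero, map_one, one_mul]
    exact one_mem _
  | succ b ih =>
    intro m hm
    rcases Nat.eq_zero_or_pos m with rfl | hmpos
    · have h0 : C (a ^ (b+1)) * X ^ 0 = C a * (C (a ^ b) * X ^ 0) := by
        rw [pow_succ, map_mul]; ring
      rw [h0]
      have hCa : C a ∈ Algebra.adjoin A S := by
        rw [← Polynomial.algebraMap_eq]
        exact Subalgebra.algebraMap_mem _ a
      exact mul_mem hCa (ih 0 (Nat.zero_le _))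
    · set j := min m w with hj
      rcases Nat.eq_zero_or_pos w with rfl | hwpos
      · simp only [Nat.zero_mul, Nat.le_zero] at hm; omega
      have hj1 : 1 ≤ j := le_min hmpos hwpos
      have hjw : j ≤ w := min_le_right _ _
      have hjm : j ≤ m := min_le_left _ _
      have hrest : m - j ≤ w * b := by
        rcases le_total m w with h | h
        · have : j = m := min_eq_left h
          omega
        · have : j = w := min_eq_right h
          rw [Nat.mul_succ] at hm
          omega
      have : C (a ^ (b+1)) * X ^ m = (C a * X ^ j) * (C (a ^ b) * X ^ (m - j)) := by
        rw [pow_succ, map_mul]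
        rw [show X ^ m = X ^ j * X ^ (m - j) from by rw [← pow_add]; congr 1; omega]
        ring
      rw [this]
      exact mul_mem (hgen j hj1 hjw) (ih (m - j) hrest)

end Aux

/-- in `A[T]`, the `A`-subalgebra generated by the elements `xᵢ·T^j` for
`1 ≤ j ≤ wᵢ` consists exactly of the polynomials all of whose coefficients satisfy: the
coefficient of `T^m` lies in the ideal `I_m` generated by the monomials `x₁^{b₁} ⋯ x_r^{b_r}`
with `∑ wᵢ bᵢ ≥ m`. -/
theorem mem_adjoin_weighted_iff_coeff_mem
    {A : Type*} [CommRing A] {r : ℕ} (x : Fin r → A) (w : Fin r → ℕ) (hw : ∀ i, 0 < w i)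
    (f : Polynomial A) :
    f ∈ Algebra.adjoin A {p : Polynomial A |
        ∃ (i : Fin r) (j : ℕ), 1 ≤ j ∧ j ≤ w i ∧
          p = Polynomial.C (x i) * Polynomial.X ^ j} ↔
      ∀ m : ℕ, f.coeff m ∈
        Ideal.span {y : A | ∃ b : Fin r → ℕ, m ≤ ∑ i, w i * b i ∧ y = ∏ i, x i ^ b i} := by
  set S : Set (Polynomial A) := {p : Polynomial A |
      ∃ (i : Fin r) (j : ℕ), 1 ≤ j ∧ j ≤ w i ∧
        p = Polynomial.C (x i) * Polynomial.X ^ j} with hS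
  constructor
  · intro hf
    induction hf using Algebra.adjoin_induction with
    | mem p hp =>
      obtain ⟨i, j, hj1, hjw, rfl⟩ := hp
      intro m
      rw [coeff_C_mul, coeff_X_pow]
      by_cases h : m = j
      · subst h
        simp only [if_pos rfl, mul_one]
        apply Ideal.subset_span
        refine ⟨fun k => if k = i then 1 else 0, ?_, ?_⟩
        · simp only [Finset.sum_ite_eq', Finset.mem_univ, if_true, mul_ite, mul_one, mul_zero]
          omega
        · simp [Finset.prod_ite_eq']
      · rw [if_neg h, mul_zero]; exact zero_mem _
    | algebraMap a =>
      intro m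
      rw [Polynomial.algebraMap_apply, Polynomial.coeff_C]  -- coeff of C a
      by_cases h : m = 0
      · subst h
        simp only [if_pos rfl]
        have : a = a * 1 := (mul_one a).symm
        rw [this]
        exact Ideal.mul_mem_left _ _ (one_mem_Im x w)
      · simp [if_neg h]
    | add p q hp hq ihp ihq =>
      intro m
      rw [coeff_add]
      exact add_mem (ihp m) (ihq m)
    | mul p q hp hq ihp ihq =>
      intro m
      rw [coeff_mul]
      apply sum_mem
      rintro ⟨k, l⟩ hkl
      rw [Finset.HasAntidiagonal.mem_antidiagonal] at hkl
      have := mul_mem_Im x w k l (ihp k) (ihq l)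
      rw [hkl] at this
      exact this
  · intro hf
    rw [f.as_sum_support_C_mul_X_pow]
    apply sum_mem
    intro m _
    have hm := hf m
    clear hf
    revert hm
    generalize f.coeff m = a
    intro hm
    -- show C a * X ^ m ∈ adjoin
    induction hm using Submodule.span_induction with
    | mem a hmem =>
      obtain ⟨b, hb, rfl⟩ := hmem
      -- C (∏ x i ^ b i) * X ^ m ∈ adjoin, m ≤ ∑ w i * b i
      have key : ∀ (s : Finset (Fin r)) (m : ℕ), m ≤ ∑ i ∈ s, w i * b i →
          C (∏ i ∈ s, x i ^ b i) * X ^ m ∈ Algebra.adjoin A S := by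
        intro s
        induction s using Finset.induction with
        | empty =>
          intro m hm
          simp only [Finset.sum_empty, Nat.le_zero] at hm
          subst hm
          simp only [Finset.prod_empty, map_one, one_mul, pow_zero]
          exact one_mem _
        | insert _ _ hi ih =>
          rename_i i s
          intro m hm
          rw [Finset.sum_insert hi] at hm
          set m₁ := min m (w i * b i) with hm₁
          have h1 : m₁ ≤ w i * b i := min_le_right _ _
          have h2 : m - m₁ ≤ ∑ k ∈ s, w k * b k := by omega
          have : C (∏ k ∈ insert i s, x k ^ b k) * X ^ m =
              (C (x i ^ b i) * X ^ m₁) * (C (∏ k ∈ s, x k ^ b k) * X ^ (m - m₁)) := by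
            rw [Finset.prod_insert hi, map_mul,
              show X ^ m = X ^ m₁ * X ^ (m - m₁) from by
                rw [← pow_add]; congr 1; omega]
            ring
          rw [this]
          refine mul_mem ?_ (ih (m - m₁) h2)
          exact single_mem (x i) (w i)
            (fun j hj1 hjw => Algebra.subset_adjoin
              (show _ ∈ S from ⟨i, j, hj1, hjw, rfl⟩)) (b i) m₁ h1
      have := key Finset.univ m hb
      exact this
    | zero =>
      simp only [map_zero, zero_mul]
      exact zero_mem _
    | add u v hu hv ihu ihv =>
      rw [map_add, add_mul]
      exact add_mem ihu ihv
    | smul t u hu ihu =>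
      rw [smul_eq_mul, map_mul]
      rw [mul_assoc]
      exact mul_mem (Subalgebra.algebraMap_mem _ t) ihu
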